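/- In the twisted q-Yangian Y_q^{tw}(\mathfrak{o}_n), for 1 \le i < j < n the relations [s_{ij}(u), s_{j+1,j}^{(0)}]_q = (q^{-1}-q)\, s_{i,j+1}(u) and [s_{ji}(u), s_{j+1,j}^{(0)}]_q = (q^{-1}-q)\, s_{j+1,i}(u) follow from the reflection-equation defining relations (2.15), where [x,y]_q = xy - qyx. -/
import Mathlib


/-- The coefficient of `u^{-m} v^{-l}` in the series
`α_{ijab}(u,v) = (q^{-δ_{aj}} - q^{δ_{aj}} uv) s_{ia}(u) s_{jb}(v)
  + (q⁻¹ - q)(δ_{j<a} + uv δ_{a<j}) s_{ij}(u) s_{ab}(v)`,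
where `s i j : ℤ → A` records the coefficients `s_{ij}^{(r)}` of
`s_{ij}(u) = ∑_{r ≥ 0} s_{ij}^{(r)} u^{-r}` (extended by zero to negative `r`). -/
noncomputable def alphaCoeff {A : Type*} [Ring A] [Algebra (RatFunc ℂ) A]
    (q : RatFunc ℂ) {n : ℕ} (s : Fin n → Fin n → ℤ → A)
    (i j a b : Fin n) (m l : ℤ) : A :=
  (if a = j then q⁻¹ else 1) • (s i a m * s j b l)
  - (if a = j then q else 1) • (s i a (m + 1) * s j b (l + 1))
  + (q⁻¹ - q) • ((if j < a then s i j m * s a b l else 0)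
      + (if a < j then s i j (m + 1) * s a b (l + 1) else 0))

/-- In the twisted q-Yangian `Y_q^tw(𝔬_n)` (presented by the coefficientwise
form of the reflection-equation relation (2.15), together with
`s_{ij}^{(0)} = 0` for `i < j` and `s_{ii}^{(0)} = 1`), for `i < j` with
`j + 1 < n` one has `[s_{ij}(u), s_{j+1,j}^{(0)}]_q = (q⁻¹-q) s_{i,j+1}(u)` and
`[s_{ji}(u), s_{j+1,j}^{(0)}]_q = (q⁻¹-q) s_{j+1,i}(u)`, coefficientwise. -/
theorem zero_mode_relations {A : Type*} [Ring A] [Algebra (RatFunc ℂ) A]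
    (q : RatFunc ℂ) (hq : q = RatFunc.X) {n : ℕ}
    (s : Fin n → Fin n → ℤ → A)
    (hneg : ∀ i j : Fin n, ∀ r : ℤ, r < 0 → s i j r = 0)
    (h0lt : ∀ i j : Fin n, i < j → s i j 0 = 0)
    (h0diag : ∀ i : Fin n, s i i 0 = 1)
    (hrel : ∀ i j a b : Fin n, ∀ m l : ℤ,
      (if i = j then q⁻¹ else 1) • alphaCoeff q s i j a b (m + 1) l
        - (if i = j then q else 1) • alphaCoeff q s i j a b m (l + 1)
        + (q⁻¹ - q) • ((if j < i then alphaCoeff q s j i a b (m + 1) l else 0)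
            + (if i < j then alphaCoeff q s j i a b m (l + 1) else 0))
      = (if a = b then q⁻¹ else 1) • alphaCoeff q s j i b a l (m + 1)
        - (if a = b then q else 1) • alphaCoeff q s j i b a (l + 1) m
        + (q⁻¹ - q) • ((if a < b then alphaCoeff q s j i a b l (m + 1) else 0)
            + (if b < a then alphaCoeff q s j i a b (l + 1) m else 0))) :
    ∀ (i j : Fin n) (hj : (j : ℕ) + 1 < n), i < j → ∀ m : ℤ,
      (s i j m * s ⟨(j : ℕ) + 1, hj⟩ j 0
          - q • (s ⟨(j : ℕ) + 1, hj⟩ j 0 * s i j m)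
        = (q⁻¹ - q) • s i ⟨(j : ℕ) + 1, hj⟩ m)
      ∧ (s j i m * s ⟨(j : ℕ) + 1, hj⟩ j 0
          - q • (s ⟨(j : ℕ) + 1, hj⟩ j 0 * s j i m)
        = (q⁻¹ - q) • s ⟨(j : ℕ) + 1, hj⟩ i m) := by
  intro i j hj hij m
  set j' : Fin n := ⟨(j : ℕ) + 1, hj⟩ with hj'def
  have hjj' : j < j' := by simp [hj'def, Fin.lt_def]
  have hij' : i < j' := lt_trans hij hjj'
  have hm1 : ∀ a b : Fin n, s a b (-1) = 0 := fun a b => hneg a b (-1) (by norm_num)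
  have hm2 : ∀ a b : Fin n, s a b (-2) = 0 := fun a b => hneg a b (-2) (by norm_num)
  have hij0 : s i j 0 = 0 := h0lt i j hij
  have hjj0 : s j j 0 = 1 := h0diag j
  constructor
  · have key := hrel i j' j j (m - 1) (-2)
    simp only [alphaCoeff, hij'.ne, hjj'.ne, hjj'.ne', hij.ne, hij.ne', hij'.ne',
      hij, hjj', hij', hjj'.asymm, hij.asymm, hij'.asymm,
      if_true, if_false, eq_self_iff_true, not_lt_of_gt hjj', not_lt_of_gt hij,
      not_lt_of_gt hij', ite_true, ite_false, one_smul, lt_irrefl,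
      show (-2 : ℤ) + 1 = -1 from rfl, show (-1 : ℤ) + 1 = 0 from rfl,
      sub_add_cancel, hm1, hm2, hij0, hjj0, mul_zero, zero_mul, mul_one, one_mul,
      smul_zero, sub_zero, zero_sub, add_zero, zero_add, neg_zero, smul_neg,
      neg_neg] at key
    rw [← key]; abel
  · have key := hrel j j' i j (m - 1) (-2)
    simp only [alphaCoeff, hij'.ne, hjj'.ne, hjj'.ne', hij.ne, hij.ne', hij'.ne',
      hij, hjj', hij', hjj'.asymm, hij.asymm, hij'.asymm,
      if_true, if_false, eq_self_iff_true, not_lt_of_gt hjj', not_lt_of_gt hij,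
      not_lt_of_gt hij', ite_true, ite_false, one_smul, lt_irrefl,
      show (-2 : ℤ) + 1 = -1 from rfl, show (-1 : ℤ) + 1 = 0 from rfl,
      sub_add_cancel, hm1, hm2, hij0, hjj0, mul_zero, zero_mul, mul_one, one_mul,
      smul_zero, sub_zero, zero_sub, add_zero, zero_add, neg_zero, smul_neg,
      neg_neg] at key
    rw [← key]; abel
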